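/- Let E be a countable set, h > 0, and a ∈ ℓ²(E, ℂ). For each n the function E_{a,F_n}(x) = exp(ℓ_{a,F_n}(x)) belongs to L²(ℝ^E, μ_{E,h}^K), the sequence (E_{a,F_n})_{n≥0} is a Cauchy sequence in L²(μ_{E,h}^K), its limit E_a does not depend on the chosen exhausting sequence, and ‖E_a‖²_{L²(μ_{E,h}^K)} = exp(h Σ_{j∈E} (Re a_j)²). (Theorem 2.6, exponential part.) -/

import Mathlib

open MeasureTheory ProbabilityTheory Filter
open scoped NNReal ENNReal

/-- `ℓ_{a,S}(x) = ∑_{j∈S} a_j x_j`. -/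
noncomputable def ellSum {E : Type*} (a : E → ℂ) (S : Finset E) (x : E → ℝ) : ℂ :=
  ∑ j ∈ S, a j * (x j : ℂ)


open Complex
open scoped Real Topology

set_option linter.unusedSectionVars false

section Scalar
variable (v : ℝ≥0) (hv : v ≠ 0) (c : ℂ)

lemma gauss_hb (hv : v ≠ 0) : (-(1 / (2 * (v:ℂ)))).re < 0 := by
  have hvpos : (0:ℝ) < v := lt_of_le_of_ne v.coe_nonneg (by exact_mod_cast hv.symm)
  have : (2 * (v:ℂ)) = ((2 * v : ℝ) : ℂ) := by push_cast; ring
  rw [this, ← Complex.ofReal_one, ← Complex.ofReal_div, neg_re, Complex.ofReal_re]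
  exact neg_lt_zero.mpr (by positivity)

lemma gauss_pt (hv : v ≠ 0) (t : ℝ) : gaussianPDFReal 0 v t • Complex.exp (c * t)
    = (√(2 * π * v))⁻¹ • Complex.exp (-(1 / (2 * (v:ℂ))) * t^2 + c * t + 0) := by
  have hvpos : (0:ℝ) < v := lt_of_le_of_ne v.coe_nonneg (by exact_mod_cast hv.symm)
  have hvC : (v:ℂ) ≠ 0 := by exact_mod_cast hv
  rw [gaussianPDFReal, mul_smul]
  congr 1
  rw [Complex.real_smul, Complex.ofReal_exp, ← Complex.exp_add]
  congr 1
  rw [add_zero]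
  push_cast
  field_simp
  ring

lemma gauss_cexp_integrable (hv : v ≠ 0) :
    Integrable (fun t : ℝ => Complex.exp (c * t)) (gaussianReal 0 v) := by
  have hmeas : Measurable fun t => (gaussianPDFReal 0 v t).toNNReal :=
    (measurable_gaussianPDFReal 0 v).real_toNNReal
  have hd : gaussianReal 0 v
      = volume.withDensity (fun t => ((gaussianPDFReal 0 v t).toNNReal : ℝ≥0∞)) := by
    rw [gaussianReal_of_var_ne_zero 0 hv]; rfl
  rw [hd, integrable_withDensity_iff_integrable_smul hmeas]
  have : ∀ t : ℝ, (gaussianPDFReal 0 v t).toNNReal • Complex.exp (c * t)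
      = (√(2 * π * v))⁻¹ • Complex.exp (-(1 / (2 * (v:ℂ))) * t^2 + c * t + 0) := by
    intro t
    rw [NNReal.smul_def, Real.coe_toNNReal _ (gaussianPDFReal_nonneg 0 v t), gauss_pt v c hv]
  simp_rw [this]
  exact (integrable_cexp_quadratic' (gauss_hb v hv) c 0).smul ((√(2 * π * v))⁻¹ : ℝ)

lemma gauss_density_smul (hv : v ≠ 0) (g : ℝ → ℂ) :
    (∫ t, g t ∂(gaussianReal 0 v)) = ∫ t, gaussianPDFReal 0 v t • g t := by
  have hmeas : Measurable fun t => (gaussianPDFReal 0 v t).toNNReal :=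
    (measurable_gaussianPDFReal 0 v).real_toNNReal
  have hd : gaussianReal 0 v
      = volume.withDensity (fun t => ((gaussianPDFReal 0 v t).toNNReal : ℝ≥0∞)) := by
    rw [gaussianReal_of_var_ne_zero 0 hv]; rfl
  rw [hd, integral_withDensity_eq_integral_smul hmeas]
  congr 1; ext t
  rw [NNReal.smul_def, Real.coe_toNNReal _ (gaussianPDFReal_nonneg 0 v t)]

lemma gauss_cexp_integral (hv : v ≠ 0) :
    ∫ t : ℝ, Complex.exp (c * t) ∂(gaussianReal 0 v) = Complex.exp ((v:ℂ) * c ^ 2 / 2) := by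
  have hvpos : (0:ℝ) < v := lt_of_le_of_ne v.coe_nonneg (by exact_mod_cast hv.symm)
  have hvC : (v:ℂ) ≠ 0 := by exact_mod_cast hv
  rw [gauss_density_smul v hv]
  simp_rw [gauss_pt v c hv]
  rw [integral_smul, integral_cexp_quadratic (gauss_hb v hv) c 0]
  have h2πv : (0:ℝ) < 2*π*v := by positivity
  have h1 : (π / -(-(1 / (2 * (v:ℂ)))) : ℂ) = ((2 * π * v : ℝ) : ℂ) := by
    push_cast; field_simp
  have h2 : ((2 * π * v : ℝ) : ℂ) ^ (1/2 : ℂ) = ((√(2 * π * v) : ℝ) : ℂ) := by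
    rw [show (1/2 : ℂ) = ((1/2 : ℝ) : ℂ) by norm_num,
      ← Complex.ofReal_cpow h2πv.le, Real.sqrt_eq_rpow]
  have h3 : (0 : ℂ) - c ^ 2 / (4 * -(1 / (2 * (v:ℂ)))) = (v:ℂ) * c ^ 2 / 2 := by
    field_simp; ring
  rw [h1, h2, h3, Complex.real_smul]
  rw [← mul_assoc, ← Complex.ofReal_mul]
  rw [inv_mul_cancel₀ (ne_of_gt (Real.sqrt_pos.mpr h2πv))]
  simp

end Scalar


lemma gauss_pi_integrable (v : ℝ≥0) (hv : v ≠ 0) {ι : Type*} [Fintype ι] (c : ι → ℂ) :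
    Integrable (fun y : ι → ℝ => Complex.exp (∑ j, c j * y j))
      (Measure.pi fun _ => gaussianReal 0 v) := by
  letI : MeasureSpace ℝ := ⟨gaussianReal 0 v⟩
  haveI : SigmaFinite (volume : Measure ℝ) := inferInstanceAs (SigmaFinite (gaussianReal 0 v))
  have : ∀ y : ι → ℝ, Complex.exp (∑ j, c j * y j) = ∏ j, Complex.exp (c j * y j) :=
    fun y => Complex.exp_sum _ _
  simp_rw [this]
  have := MeasureTheory.Integrable.fintype_prod (f := fun j (t : ℝ) => Complex.exp (c j * t))
    (fun i => gauss_cexp_integrable v (c i) hv)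
  simpa [volume_pi] using this

lemma gauss_pi_integral (v : ℝ≥0) (hv : v ≠ 0) {ι : Type*} [Fintype ι] (c : ι → ℂ) :
    ∫ y : ι → ℝ, Complex.exp (∑ j, c j * y j) ∂(Measure.pi fun _ => gaussianReal 0 v)
      = Complex.exp ((v:ℂ) * (∑ j, c j ^ 2) / 2) := by
  letI : MeasureSpace ℝ := ⟨gaussianReal 0 v⟩
  haveI : SigmaFinite (volume : Measure ℝ) := inferInstanceAs (SigmaFinite (gaussianReal 0 v))
  have h1 : ∀ y : ι → ℝ, Complex.exp (∑ j, c j * y j) = ∏ j, Complex.exp (c j * y j) :=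
    fun y => Complex.exp_sum _ _
  simp_rw [h1]
  have h2 := MeasureTheory.integral_fintype_prod_eq_prod (ι := ι) (μ := fun _ => volume)
    (f := fun j (t : ℝ) => Complex.exp (c j * t))
  rw [show (Measure.pi fun _ : ι => gaussianReal 0 v) = (volume : Measure (ι → ℝ)) by
      rw [volume_pi]; rfl]
  rw [volume_pi, h2]
  have h3 : ∀ j, ∫ t : ℝ, Complex.exp (c j * t) = Complex.exp ((v:ℂ) * c j ^ 2 / 2) :=
    fun j => gauss_cexp_integral v (c j) hv
  simp_rw [h3]
  rw [← Complex.exp_sum]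
  congr 1
  rw [Finset.mul_sum, Finset.sum_div]


section Mu
variable {E : Type*} {h : ℝ} {μ : Measure (E → ℝ)}

lemma mu_cexp (hh : 0 < h)
    (hμ : ∀ S : Finset E, μ.map (fun x (i : S) => x i) =
      Measure.pi fun _ : S => gaussianReal 0 (h / 2).toNNReal)
    (S : Finset E) (c : E → ℂ) :
    Integrable (fun x => Complex.exp (∑ j ∈ S, c j * x j)) μ ∧
    ∫ x, Complex.exp (∑ j ∈ S, c j * x j) ∂μ
      = Complex.exp (((h/4 : ℝ) : ℂ) * ∑ j ∈ S, c j ^ 2) := by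
  set v : ℝ≥0 := (h/2).toNNReal with hvdef
  have hv : v ≠ 0 := by
    simp only [hvdef, ne_eq, Real.toNNReal_eq_zero, not_le]
    linarith
  have hvR : (v : ℝ) = h / 2 := Real.coe_toNNReal _ (by linarith)
  set restr : (E → ℝ) → (S → ℝ) := fun x (i : S) => x i with hrdef
  have hrestr : Measurable restr :=
    measurable_pi_lambda _ (fun i => measurable_pi_apply _)
  set g : (S → ℝ) → ℂ := fun y => Complex.exp (∑ j : S, c j * y j) with hgdef
  have hgm : Measurable g := by
    apply Complex.measurable_exp.comp
    exact Finset.measurable_sum _ (fun j _ => (Complex.measurable_ofReal.comp (measurable_pi_apply j)).const_mul _)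
  have hcomp : ∀ x, Complex.exp (∑ j ∈ S, c j * x j) = g (restr x) := by
    intro x
    simp only [hgdef, hrdef]
    rw [← Finset.sum_coe_sort S (fun j => c j * (x j : ℂ))]
  have hval : (v:ℂ) * (∑ j : S, c j ^ 2) / 2 = ((h/4 : ℝ) : ℂ) * ∑ j ∈ S, c j ^ 2 := by
    rw [Finset.sum_coe_sort S (fun j => c j ^ 2)]
    rw [show ((v:ℝ):ℂ) = ((h/2 : ℝ):ℂ) by rw [hvR]]
    push_cast
    ring
  constructor
  · have hInt : Integrable g (μ.map restr) := by
      rw [hμ S]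
      exact gauss_pi_integrable v hv _
    have := (integrable_map_measure (hgm.aestronglyMeasurable) hrestr.aemeasurable).mp hInt
    simp only [hcomp]; exact this
  · simp_rw [hcomp]
    rw [← integral_map hrestr.aemeasurable hgm.aestronglyMeasurable, hμ S]
    rw [show g = fun y : S → ℝ => Complex.exp (∑ j : S, c j * y j) from rfl]
    rw [gauss_pi_integral v hv (fun j : S => c j), hval]

lemma mu_rexp (hh : 0 < h)
    (hμ : ∀ S : Finset E, μ.map (fun x (i : S) => x i) =
      Measure.pi fun _ : S => gaussianReal 0 (h / 2).toNNReal)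
    (S : Finset E) (b : E → ℝ) :
    Integrable (fun x => Real.exp (∑ j ∈ S, b j * x j)) μ ∧
    ∫ x, Real.exp (∑ j ∈ S, b j * x j) ∂μ = Real.exp ((h/4) * ∑ j ∈ S, b j ^ 2) := by
  obtain ⟨hInt, hEq⟩ := mu_cexp hh hμ S (fun j => (b j : ℂ))
  have hcast : ∀ x : E → ℝ, Complex.exp (∑ j ∈ S, ((b j : ℂ)) * (x j : ℂ))
      = ((Real.exp (∑ j ∈ S, b j * x j) : ℝ) : ℂ) := by
    intro x; rw [Complex.ofReal_exp]; push_cast; ring_nf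
  constructor
  · have := hInt.re
    refine this.congr (Filter.Eventually.of_forall fun x => ?_)
    show RCLike.re (Complex.exp (∑ j ∈ S, ((b j : ℂ)) * (x j : ℂ))) = Real.exp (∑ j ∈ S, b j * x j)
    rw [RCLike.re_eq_complex_re, hcast x, Complex.ofReal_re]
  · have h1 : ∫ x, Real.exp (∑ j ∈ S, b j * x j) ∂μ
        = ∫ x, RCLike.re (Complex.exp (∑ j ∈ S, ((b j : ℂ)) * (x j : ℂ))) ∂μ := by
      refine integral_congr_ae (Filter.Eventually.of_forall fun x => ?_)
      show Real.exp (∑ j ∈ S, b j * x j) = RCLike.re (Complex.exp (∑ j ∈ S, ((b j : ℂ)) * (x j : ℂ)))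
      rw [RCLike.re_eq_complex_re, hcast x, Complex.ofReal_re]
    rw [h1, integral_re hInt, hEq]
    have h2 : (((h/4 : ℝ)):ℂ) * ∑ j ∈ S, ((b j : ℂ)) ^ 2
        = (((h/4) * ∑ j ∈ S, b j ^ 2 : ℝ) : ℂ) := by push_cast; ring
    rw [RCLike.re_eq_complex_re, h2, ← Complex.ofReal_exp, Complex.ofReal_re]
end Mu


section MuD
variable {E : Type*} [DecidableEq E] {h : ℝ} {μ : Measure (E → ℝ)}

lemma normsq_exp_ell (a : E → ℂ) (S : Finset E) (x : E → ℝ) :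
    ‖Complex.exp (ellSum a S x)‖^2 = Real.exp (∑ j ∈ S, (2 * (a j).re) * x j) := by
  rw [Complex.norm_exp, sq, ← Real.exp_add]
  congr 1
  rw [ellSum, Complex.re_sum]
  rw [← two_mul, Finset.mul_sum]
  refine Finset.sum_congr rfl fun j _ => ?_
  simp [Complex.mul_re]
  ring

lemma cross_eq (a : E → ℂ) (F G : Finset E) (hFG : F ⊆ G) (x : E → ℝ) :
    Complex.exp (ellSum a G x) * (starRingEnd ℂ) (Complex.exp (ellSum a F x))
      = Complex.exp (∑ j ∈ G, (a j + (if j ∈ F then (starRingEnd ℂ) (a j) else 0)) * (x j : ℂ)) := by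
  rw [← Complex.exp_conj, ← Complex.exp_add]
  congr 1
  rw [ellSum, ellSum, map_sum]
  simp_rw [map_mul, Complex.conj_ofReal, add_mul, Finset.sum_add_distrib, ite_mul, zero_mul]
  congr 1
  rw [Finset.sum_ite_mem, Finset.inter_eq_right.mpr hFG]

lemma cross_sum_sq (a : E → ℂ) (F G : Finset E) (hFG : F ⊆ G) :
    ∑ j ∈ G, (a j + (if j ∈ F then (starRingEnd ℂ) (a j) else 0)) ^ 2
      = ((4 * ∑ j ∈ F, (a j).re ^ 2 : ℝ) : ℂ) + ∑ j ∈ G \ F, (a j) ^ 2 := by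
  have h1 : ∑ j ∈ F, (a j + (if j ∈ F then (starRingEnd ℂ) (a j) else 0)) ^ 2
      = ((4 * ∑ j ∈ F, (a j).re ^ 2 : ℝ) : ℂ) := by
    push_cast
    rw [Finset.mul_sum]
    refine Finset.sum_congr rfl fun j hj => ?_
    rw [if_pos hj, Complex.add_conj]
    push_cast
    ring
  have h2 : ∑ j ∈ G \ F, (a j + (if j ∈ F then (starRingEnd ℂ) (a j) else 0)) ^ 2
      = ∑ j ∈ G \ F, (a j) ^ 2 :=
    Finset.sum_congr rfl fun j hj => by rw [if_neg (Finset.mem_sdiff.mp hj).2, add_zero]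
  rw [← Finset.sum_sdiff hFG, h1, h2, add_comm]


lemma exp_ell_sq_int (hh : 0 < h)
    (hμ : ∀ S : Finset E, μ.map (fun x (i : S) => x i) =
      Measure.pi fun _ : S => gaussianReal 0 (h / 2).toNNReal)
    (a : E → ℂ) (S : Finset E) :
    Integrable (fun x => ‖Complex.exp (ellSum a S x)‖^2) μ ∧
    ∫ x, ‖Complex.exp (ellSum a S x)‖^2 ∂μ = Real.exp (h * ∑ j ∈ S, (a j).re^2) := by
  obtain ⟨hI, hE⟩ := mu_rexp hh hμ S (fun j => 2*(a j).re)
  have hsum : (h/4) * ∑ j ∈ S, (2*(a j).re)^2 = h * ∑ j ∈ S, (a j).re^2 := by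
    rw [show ∑ j ∈ S, (2*(a j).re)^2 = 4 * ∑ j ∈ S, (a j).re^2 by
      rw [Finset.mul_sum]; exact Finset.sum_congr rfl fun j _ => by ring]
    ring
  constructor
  · exact hI.congr (Filter.Eventually.of_forall fun x => (normsq_exp_ell a S x).symm)
  · rw [integral_congr_ae (Filter.Eventually.of_forall fun x => normsq_exp_ell a S x), hE, hsum]

lemma cross_int (hh : 0 < h)
    (hμ : ∀ S : Finset E, μ.map (fun x (i : S) => x i) =
      Measure.pi fun _ : S => gaussianReal 0 (h / 2).toNNReal)
    (a : E → ℂ) (F G : Finset E) (hFG : F ⊆ G) :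
    Integrable (fun x =>
      (Complex.exp (ellSum a G x) * (starRingEnd ℂ) (Complex.exp (ellSum a F x))).re) μ ∧
    ∫ x, (Complex.exp (ellSum a G x) * (starRingEnd ℂ) (Complex.exp (ellSum a F x))).re ∂μ
      = Real.exp (h * ∑ j ∈ F, (a j).re^2) *
          (Complex.exp (((h/4:ℝ):ℂ) * ∑ j ∈ G \ F, (a j)^2)).re := by
  obtain ⟨hI, hE⟩ := mu_cexp hh hμ G (fun j => a j + (if j ∈ F then (starRingEnd ℂ) (a j) else 0))
  have harg : ((h/4:ℝ):ℂ) * ∑ j ∈ G, (a j + (if j ∈ F then (starRingEnd ℂ) (a j) else 0)) ^ 2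
      = ((h * ∑ j ∈ F, (a j).re^2 : ℝ) : ℂ) + ((h/4:ℝ):ℂ) * ∑ j ∈ G \ F, (a j)^2 := by
    rw [cross_sum_sq a F G hFG, mul_add]
    congr 1
    push_cast
    ring
  have hfe : (fun x => (Complex.exp (ellSum a G x) *
        (starRingEnd ℂ) (Complex.exp (ellSum a F x))).re)
      = fun x => (Complex.exp (∑ j ∈ G,
          (a j + (if j ∈ F then (starRingEnd ℂ) (a j) else 0)) * (x j : ℂ))).re := by
    funext x
    rw [cross_eq a F G hFG x]
  have hIre := hI.re
  simp only [RCLike.re_eq_complex_re] at hIre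
  have hint := integral_re hI
  simp only [RCLike.re_eq_complex_re] at hint
  constructor
  · rw [hfe]
    exact hIre
  · rw [hfe, hint, hE, harg, Complex.exp_add, ← Complex.ofReal_exp, Complex.re_ofReal_mul]

lemma diff_sq_int (hh : 0 < h)
    (hμ : ∀ S : Finset E, μ.map (fun x (i : S) => x i) =
      Measure.pi fun _ : S => gaussianReal 0 (h / 2).toNNReal)
    (a : E → ℂ) (F G : Finset E) (hFG : F ⊆ G) :
    Integrable (fun x => ‖Complex.exp (ellSum a G x) - Complex.exp (ellSum a F x)‖^2) μ ∧
    ∫ x, ‖Complex.exp (ellSum a G x) - Complex.exp (ellSum a F x)‖^2 ∂μ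
      = Real.exp (h * ∑ j ∈ G, (a j).re^2) + Real.exp (h * ∑ j ∈ F, (a j).re^2)
        - 2 * (Real.exp (h * ∑ j ∈ F, (a j).re^2) *
            (Complex.exp (((h/4:ℝ):ℂ) * ∑ j ∈ G \ F, (a j)^2)).re) := by
  have pt : ∀ z w : ℂ, ‖z - w‖^2 = ‖z‖^2 + ‖w‖^2 - 2 * (z * (starRingEnd ℂ) w).re := by
    intro z w
    simp only [Complex.sq_norm]
    exact Complex.normSq_sub z w
  obtain ⟨hIG, hEG⟩ := exp_ell_sq_int hh hμ a G
  obtain ⟨hIF, hEF⟩ := exp_ell_sq_int hh hμ a F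
  obtain ⟨hIc, hEc⟩ := cross_int hh hμ a F G hFG
  constructor
  · refine (((hIG.add hIF).sub (hIc.const_mul 2)).congr
      (Filter.Eventually.of_forall fun x => ?_))
    exact (pt _ _).symm
  · rw [integral_congr_ae (Filter.Eventually.of_forall fun x =>
      pt (Complex.exp (ellSum a G x)) (Complex.exp (ellSum a F x)))]
    have hadd : Integrable (fun x => ‖Complex.exp (ellSum a G x)‖^2
        + ‖Complex.exp (ellSum a F x)‖^2) μ := hIG.add hIF
    have hmul : Integrable (fun x => 2 * (Complex.exp (ellSum a G x) *
        (starRingEnd ℂ) (Complex.exp (ellSum a F x))).re) μ := hIc.const_mul 2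
    rw [integral_sub hadd hmul, integral_add hIG hIF, integral_const_mul, hEG, hEF, hEc]

end MuD


section Helpers
variable {α : Type*} {m : MeasurableSpace α} {ν : Measure α} {f : α → ℂ}

lemma sq_eLpNorm_two (hf : MemLp f 2 ν) :
    eLpNorm f 2 ν ^ 2 = ENNReal.ofReal (∫ x, ‖f x‖^2 ∂ν) := by
  rw [hf.eLpNorm_eq_integral_rpow_norm two_ne_zero ENNReal.ofNat_ne_top]
  rw [← ENNReal.ofReal_pow (by positivity)]
  congr 1
  have h2 : ((2:ℝ≥0∞).toReal) = (2:ℝ) := by simp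
  rw [h2]
  have hpt : ∀ x, ‖f x‖ ^ (2:ℝ) = ‖f x‖^(2:ℕ) := fun x => by
    rw [show (2:ℝ) = ((2:ℕ):ℝ) by norm_num, Real.rpow_natCast]
  simp_rw [hpt]
  have hnn : 0 ≤ ∫ x, ‖f x‖ ^ (2:ℕ) ∂ν := integral_nonneg fun x => by positivity
  rw [← Real.rpow_natCast ((∫ x, ‖f x‖ ^ (2:ℕ) ∂ν) ^ (2:ℝ)⁻¹) 2, ← Real.rpow_mul hnn]
  norm_num

lemma eLpNorm_two_le_of_sq_int (hf : MemLp f 2 ν) {B : ℝ} (hB : 0 ≤ B)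
    (hint : ∫ x, ‖f x‖^2 ∂ν ≤ B^2) : eLpNorm f 2 ν ≤ ENNReal.ofReal B := by
  rw [hf.eLpNorm_eq_integral_rpow_norm two_ne_zero ENNReal.ofNat_ne_top]
  apply ENNReal.ofReal_le_ofReal
  have h2 : ((2:ℝ≥0∞).toReal) = (2:ℝ) := by simp
  rw [h2]
  have hpt : ∀ x, ‖f x‖ ^ (2:ℝ) = ‖f x‖^(2:ℕ) := fun x => by
    rw [show (2:ℝ) = ((2:ℕ):ℝ) by norm_num, Real.rpow_natCast]
  simp_rw [hpt]
  have hnn : 0 ≤ ∫ x, ‖f x‖ ^ (2:ℕ) ∂ν := integral_nonneg fun x => by positivity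
  calc (∫ x, ‖f x‖^(2:ℕ) ∂ν) ^ ((2:ℝ))⁻¹ ≤ (B^2) ^ ((2:ℝ))⁻¹ :=
        Real.rpow_le_rpow hnn hint (by norm_num)
    _ = B := by
        rw [show B^2 = B^((2:ℕ):ℝ) by rw [Real.rpow_natCast], ← Real.rpow_mul hB]
        norm_num

lemma exists_ofReal_lt {δ : ℝ≥0∞} (hδ : 0 < δ) : ∃ ε : ℝ, 0 < ε ∧ ENNReal.ofReal ε < δ := by
  by_cases htop : δ = ⊤
  · exact ⟨1, one_pos, by simp [htop]⟩
  · have h0 : 0 < δ.toReal := ENNReal.toReal_pos hδ.ne' htop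
    refine ⟨δ.toReal / 2, by positivity, ?_⟩
    rw [ENNReal.ofReal_lt_iff_lt_toReal (by positivity) htop]
    linarith

end Helpers


/-- **Theorem 2.6, exponential part.**  Let `E` be countable, `h > 0`, `a ∈ ℓ²(E, ℂ)` and
let `μ = μ_{E,h}^K` be the product over `E` of the Gaussian measures `N(0, h/2)`
(characterized by its finite-dimensional marginals).  If `(F_n)` is an increasing
exhausting sequence of finite subsets of `E`, then each `E_{a,F_n} = exp(ℓ_{a,F_n})`
belongs to `L²(μ)`, the sequence `(E_{a,F_n})` is Cauchy in `L²(μ)`, its limit `E_a` does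
not depend on the chosen exhausting sequence, and
`‖E_a‖²_{L²} = exp(h ∑_{j∈E} (Re a_j)²)`. -/
theorem exp_ell_a_L2_limit
    (E : Type*) [Countable E] (h : ℝ) (hh : 0 < h)
    (μ : Measure (E → ℝ)) [IsProbabilityMeasure μ]
    (hμ : ∀ S : Finset E,
      μ.map (fun x (i : S) => x i) =
        Measure.pi fun _ : S => gaussianReal 0 (h / 2).toNNReal)
    (a : E → ℂ) (ha : Memℓp a 2)
    (F : ℕ → Finset E) (hFmono : Monotone F) (hFexh : ∀ j : E, ∃ n, j ∈ F n) :
    (∀ n, MemLp (fun x => Complex.exp (ellSum a (F n) x)) 2 μ) ∧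
    (∀ δ : ℝ≥0∞, 0 < δ → ∃ N, ∀ m ≥ N, ∀ n ≥ N,
        eLpNorm (fun x => Complex.exp (ellSum a (F m) x) -
          Complex.exp (ellSum a (F n) x)) 2 μ < δ) ∧
    ∃ Ea : (E → ℝ) → ℂ, MemLp Ea 2 μ ∧
      (∀ F' : ℕ → Finset E, Monotone F' → (∀ j : E, ∃ n, j ∈ F' n) →
        Tendsto (fun n => eLpNorm
            (fun x => Complex.exp (ellSum a (F' n) x) - Ea x) 2 μ)
          atTop (nhds 0)) ∧
      eLpNorm Ea 2 μ ^ 2 =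
        ENNReal.ofReal (Real.exp (h * ∑' j : E, (a j).re ^ 2)) := by
  classical
  haveI : Fact ((1:ℝ≥0∞) ≤ 2) := ⟨one_le_two⟩
  -- summability
  have hsum2 : Summable (fun j => ‖a j‖ ^ (2:ℕ)) := by
    have := ha.summable (by norm_num : 0 < (2:ℝ≥0∞).toReal)
    have h2 : ((2:ℝ≥0∞).toReal) = ((2:ℕ):ℝ) := by simp
    rw [h2] at this
    simpa [Real.rpow_natCast] using this
  have hsumr : Summable (fun j => (a j).re ^ 2) := by
    refine Summable.of_nonneg_of_le (fun j => sq_nonneg _) (fun j => ?_) hsum2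
    rw [← _root_.sq_abs ((a j).re)]
    refine pow_le_pow_left₀ (abs_nonneg _) ?_ 2
    exact Complex.abs_re_le_norm _
  set T : ℝ := ∑' j, (a j).re ^ 2 with hTdef
  have hTn : 0 ≤ T := tsum_nonneg fun j => sq_nonneg _
  have hSle : ∀ S : Finset E, ∑ j ∈ S, (a j).re ^ 2 ≤ T :=
    fun S => Summable.sum_le_tsum S (fun j _ => sq_nonneg _) hsumr
  -- measurability and Memℒp
  have hmeas : ∀ S : Finset E, Measurable (fun x => Complex.exp (ellSum a S x)) := by
    intro S
    apply Complex.measurable_exp.comp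
    exact Finset.measurable_sum _
      (fun j _ => (Complex.measurable_ofReal.comp (measurable_pi_apply j)).const_mul _)
  have memS : ∀ S : Finset E, MemLp (fun x => Complex.exp (ellSum a S x)) 2 μ := by
    intro S
    rw [memLp_two_iff_integrable_sq_norm (hmeas S).aestronglyMeasurable]
    exact (exp_ell_sq_int hh hμ a S).1
  -- key quantitative estimate for nested finsets
  have key : ∀ ε : ℝ, 0 < ε → ∃ K : Finset E, ∀ F1 G1 : Finset E, K ⊆ F1 → F1 ⊆ G1 →
      ∫ x, ‖Complex.exp (ellSum a G1 x) - Complex.exp (ellSum a F1 x)‖^2 ∂μ ≤ ε := by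
    intro ε hε
    set C : ℝ := Real.exp (h * T) with hCdef
    have hCpos : 0 < C := Real.exp_pos _
    have hφ : Continuous (fun δ : ℝ => C * ((Real.exp (h*δ) - 1) + h*δ)) := by fun_prop
    have hev : ∀ᶠ δ in 𝓝 (0:ℝ), C * ((Real.exp (h*δ) - 1) + h*δ) < ε := by
      have ht := hφ.tendsto 0
      simp only [mul_zero, Real.exp_zero, sub_self, zero_add, add_zero] at ht
      exact ht.eventually_lt_const (by simpa using hε)
    have hev2 : ∀ᶠ δ in 𝓝 (0:ℝ), h*δ/4 ≤ 1 := by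
      have hc : Continuous (fun δ : ℝ => h*δ/4) := by continuity
      have ht : Tendsto (fun δ : ℝ => h*δ/4) (𝓝 0) (𝓝 0) := by
        have := hc.tendsto (0:ℝ)
        simpa using this
      exact ht.eventually_le_const one_pos
    obtain ⟨δ, ⟨hδε, hδ1⟩, hδpos⟩ :=
      ((((hev.and hev2).filter_mono (nhdsWithin_le_nhds (s := Set.Ioi (0:ℝ)))).and
        self_mem_nhdsWithin).exists)
    replace hδpos : 0 < δ := hδpos
    obtain ⟨K, hK⟩ := summable_iff_vanishing.mp hsum2 (Set.Iio δ) (Iio_mem_nhds hδpos)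
    refine ⟨K, fun F1 G1 hKF hFG => ?_⟩
    have hdisj : Disjoint (G1 \ F1) K :=
      Finset.disjoint_of_subset_right hKF Finset.sdiff_disjoint
    have htail : ∑ j ∈ G1 \ F1, ‖a j‖ ^ 2 < δ := by
      have := hK _ hdisj
      simpa using this
    set s : ℝ := ∑ j ∈ G1 \ F1, (a j).re ^ 2 with hsdef
    have hre_le : ∀ j : E, (a j).re ^ 2 ≤ ‖a j‖ ^ 2 := by
      intro j
      rw [← _root_.sq_abs ((a j).re)]
      refine pow_le_pow_left₀ (abs_nonneg _) ?_ 2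
      exact Complex.abs_re_le_norm _
    have hs : s ≤ δ := le_trans (Finset.sum_le_sum fun j _ => hre_le j) htail.le
    have hs0 : 0 ≤ s := Finset.sum_nonneg fun j _ => sq_nonneg _
    set σ : ℂ := ∑ j ∈ G1 \ F1, (a j)^2 with hσdef
    have hσn : ‖σ‖ ≤ δ := by
      refine le_trans (norm_sum_le _ _) ?_
      refine le_trans (le_of_eq (Finset.sum_congr rfl fun j _ => norm_pow _ 2)) htail.le
    set XF : ℝ := Real.exp (h * ∑ j ∈ F1, (a j).re^2) with hXFdef
    have hXF : 0 < XF := Real.exp_pos _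
    have hXFC : XF ≤ C := Real.exp_le_exp.mpr (mul_le_mul_of_nonneg_left (hSle F1) hh.le)
    set w : ℂ := Complex.exp (((h/4:ℝ):ℂ) * σ) with hwdef
    have habsz : ‖((h/4:ℝ):ℂ) * σ‖ ≤ h*δ/4 := by
      rw [norm_mul, Complex.norm_real, Real.norm_eq_abs, _root_.abs_of_nonneg (by positivity : (0:ℝ) ≤ h/4)]
      calc h/4 * ‖σ‖ ≤ h/4 * δ := mul_le_mul_of_nonneg_left hσn (by positivity)
        _ = h*δ/4 := by ring
    have hw : ‖w - 1‖ ≤ h*δ/2 := by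
      have h1 := Complex.norm_exp_sub_one_le (x := ((h/4:ℝ):ℂ) * σ)
        (by exact le_trans habsz hδ1)
      calc ‖w - 1‖ ≤ 2 * ‖((h/4:ℝ):ℂ) * σ‖ := h1
        _ ≤ 2 * (h*δ/4) := by linarith
        _ = h*δ/2 := by ring
    have hwre : 1 - w.re ≤ h*δ/2 := by
      have h1 : 1 - w.re = ((1:ℂ) - w).re := by simp [Complex.sub_re]
      calc 1 - w.re ≤ |((1:ℂ) - w).re| := by rw [h1]; exact le_abs_self _
        _ ≤ ‖(1:ℂ) - w‖ := by exact Complex.abs_re_le_norm _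
        _ = ‖w - 1‖ := by rw [norm_sub_rev]
        _ ≤ h*δ/2 := hw
    have hXG : Real.exp (h * ∑ j ∈ G1, (a j).re^2) = XF * Real.exp (h*s) := by
      rw [← Real.exp_add]
      congr 1
      rw [← Finset.sum_sdiff hFG (f := fun j => (a j).re^2)]
      ring
    obtain ⟨-, hJ⟩ := diff_sq_int hh hμ a F1 G1 hFG
    rw [hJ, hXG]
    have t1 : XF*(Real.exp (h*s) - 1) ≤ C*(Real.exp (h*δ) - 1) := by
      have e1 : Real.exp (h*s) ≤ Real.exp (h*δ) :=
        Real.exp_le_exp.mpr (mul_le_mul_of_nonneg_left hs hh.le)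
      have e0 : (0:ℝ) ≤ Real.exp (h*s) - 1 := by
        have : (1:ℝ) ≤ Real.exp (h*s) := Real.one_le_exp (by positivity)
        linarith
      exact mul_le_mul hXFC (by linarith) e0 hCpos.le
    have t2 : 2*XF*(1 - w.re) ≤ C*(h*δ) := by
      calc 2*XF*(1 - w.re) ≤ 2*XF*(h*δ/2) := mul_le_mul_of_nonneg_left hwre (by positivity)
        _ = XF*(h*δ) := by ring
        _ ≤ C*(h*δ) := mul_le_mul_of_nonneg_right hXFC (by positivity)
    have hgoal : XF * Real.exp (h*s) + XF - 2*(XF*w.re)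
        = XF*(Real.exp (h*s) - 1) + 2*XF*(1 - w.re) := by ring
    rw [hgoal]
    linarith [t1, t2, hδε]
  -- eLpNorm version of the key estimate
  have hexN : ∀ (F' : ℕ → Finset E), Monotone F' → (∀ j : E, ∃ n, j ∈ F' n) →
      ∀ K : Finset E, ∃ N, K ⊆ F' N := by
    intro F' hmono' hexh' K
    refine ⟨K.sup fun j => (hexh' j).choose, fun j hj => ?_⟩
    exact hmono' (Finset.le_sup hj) (hexh' j).choose_spec
  have keyE : ∀ ε : ℝ, 0 < ε → ∃ K : Finset E, ∀ F1 G1 : Finset E, K ⊆ F1 → K ⊆ G1 →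
      eLpNorm (fun x => Complex.exp (ellSum a F1 x) - Complex.exp (ellSum a G1 x)) 2 μ
        ≤ ENNReal.ofReal ε := by
    intro ε hε
    obtain ⟨K, hK⟩ := key ((ε/2)^2) (by positivity)
    refine ⟨K, fun F1 G1 h1 h2 => ?_⟩
    have hb1 : eLpNorm (fun x => Complex.exp (ellSum a F1 x)
        - Complex.exp (ellSum a (F1 ∪ G1) x)) 2 μ ≤ ENNReal.ofReal (ε/2) := by
      refine eLpNorm_two_le_of_sq_int ((memS _).sub (memS _)) (by positivity) ?_
      have := hK F1 (F1 ∪ G1) h1 Finset.subset_union_left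
      calc ∫ x, ‖Complex.exp (ellSum a F1 x) - Complex.exp (ellSum a (F1 ∪ G1) x)‖^2 ∂μ
          = ∫ x, ‖Complex.exp (ellSum a (F1 ∪ G1) x) - Complex.exp (ellSum a F1 x)‖^2 ∂μ := by
            refine integral_congr_ae (Filter.Eventually.of_forall fun x => ?_)
            show ‖Complex.exp (ellSum a F1 x) - Complex.exp (ellSum a (F1 ∪ G1) x)‖^2
              = ‖Complex.exp (ellSum a (F1 ∪ G1) x) - Complex.exp (ellSum a F1 x)‖^2
            rw [norm_sub_rev]
        _ ≤ (ε/2)^2 := this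
    have hb2 : eLpNorm (fun x => Complex.exp (ellSum a (F1 ∪ G1) x)
        - Complex.exp (ellSum a G1 x)) 2 μ ≤ ENNReal.ofReal (ε/2) := by
      refine eLpNorm_two_le_of_sq_int ((memS _).sub (memS _)) (by positivity) ?_
      exact hK G1 (F1 ∪ G1) h2 Finset.subset_union_right
    have hsplit : (fun x => Complex.exp (ellSum a F1 x) - Complex.exp (ellSum a G1 x))
        = (fun x => (Complex.exp (ellSum a F1 x) - Complex.exp (ellSum a (F1 ∪ G1) x))
          + (Complex.exp (ellSum a (F1 ∪ G1) x) - Complex.exp (ellSum a G1 x))) := by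
      funext x; ring
    rw [hsplit]
    refine le_trans (eLpNorm_add_le
      (((hmeas _).aestronglyMeasurable).sub ((hmeas _).aestronglyMeasurable))
      (((hmeas _).aestronglyMeasurable).sub ((hmeas _).aestronglyMeasurable)) one_le_two) ?_
    refine le_trans (add_le_add hb1 hb2) ?_
    rw [← ENNReal.ofReal_add (by positivity) (by positivity)]
    apply ENNReal.ofReal_le_ofReal
    linarith
  -- the Cauchy property
  have cauchy : ∀ δ : ℝ≥0∞, 0 < δ → ∃ N, ∀ m ≥ N, ∀ n ≥ N,
      eLpNorm (fun x => Complex.exp (ellSum a (F m) x) -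
        Complex.exp (ellSum a (F n) x)) 2 μ < δ := by
    intro δ hδ
    obtain ⟨ε, hε, hεδ⟩ := exists_ofReal_lt hδ
    obtain ⟨K, hK⟩ := keyE ε hε
    obtain ⟨N, hN⟩ := hexN F hFmono hFexh K
    exact ⟨N, fun m hm n hn => lt_of_le_of_lt
      (hK (F m) (F n) (hN.trans (hFmono hm)) (hN.trans (hFmono hn))) hεδ⟩
  -- the Lp limit
  set Φ : ℕ → Lp ℂ 2 μ := fun n => (memS (F n)).toLp _ with hΦdef
  have hΦdist : ∀ m n, dist (Φ m) (Φ n)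
      = (eLpNorm (fun x => Complex.exp (ellSum a (F m) x) -
          Complex.exp (ellSum a (F n) x)) 2 μ).toReal := by
    intro m n
    have hsub : Φ m - Φ n = (((memS (F m)).sub (memS (F n))).toLp
        (fun x => Complex.exp (ellSum a (F m) x) - Complex.exp (ellSum a (F n) x))) := by
      rw [hΦdef]
      exact (MemLp.toLp_sub _ _).symm
    rw [dist_eq_norm, hsub, Lp.norm_toLp]
  have hΦcauchy : CauchySeq Φ := by
    rw [Metric.cauchySeq_iff]
    intro ε hε
    obtain ⟨K, hK⟩ := keyE (ε/2) (by positivity)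
    obtain ⟨N, hN⟩ := hexN F hFmono hFexh K
    refine ⟨N, fun m hm n hn => ?_⟩
    rw [hΦdist m n]
    have hle := hK (F m) (F n) (hN.trans (hFmono hm)) (hN.trans (hFmono hn))
    have := ENNReal.toReal_le_of_le_ofReal (by positivity) hle
    linarith
  obtain ⟨L, hL⟩ := cauchySeq_tendsto_of_complete hΦcauchy
  -- convergence of our sequence to L in eLpNorm
  have hdistL : ∀ n, eLpNorm (fun x => Complex.exp (ellSum a (F n) x) - L x) 2 μ
      = ENNReal.ofReal (dist (Φ n) L) := by
    intro n
    have hae : (fun x => Complex.exp (ellSum a (F n) x) - L x) =ᵐ[μ] ⇑(Φ n - L) := by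
      have h1 : ⇑(Φ n - L) =ᵐ[μ] ⇑(Φ n) - ⇑L := Lp.coeFn_sub _ _
      have h2 : ⇑(Φ n) =ᵐ[μ] fun x => Complex.exp (ellSum a (F n) x) :=
        MemLp.coeFn_toLp _
      filter_upwards [h1, h2] with x hx1 hx2
      rw [hx1, Pi.sub_apply, hx2]
    rw [eLpNorm_congr_ae hae, dist_eq_norm, Lp.norm_def,
      ENNReal.ofReal_toReal (Lp.eLpNorm_ne_top _)]
  have hconv0 : Tendsto (fun n => eLpNorm
      (fun x => Complex.exp (ellSum a (F n) x) - L x) 2 μ) atTop (𝓝 0) := by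
    have hd : Tendsto (fun n => dist (Φ n) L) atTop (𝓝 0) :=
      tendsto_iff_dist_tendsto_zero.mp hL
    have h2 := (ENNReal.continuous_ofReal.tendsto 0).comp hd
    simp only [Function.comp, ENNReal.ofReal_zero] at h2
    simp_rw [hdistL]
    exact h2
  -- convergence for arbitrary exhausting sequences
  have hconv : ∀ F' : ℕ → Finset E, Monotone F' → (∀ j : E, ∃ n, j ∈ F' n) →
      Tendsto (fun n => eLpNorm
        (fun x => Complex.exp (ellSum a (F' n) x) - L x) 2 μ) atTop (𝓝 0) := by
    intro F' hmono' hexh'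
    rw [ENNReal.tendsto_atTop_zero]
    intro ε hε
    obtain ⟨ε₀, hε₀, hε₀lt⟩ := exists_ofReal_lt (ENNReal.half_pos hε.ne')
    obtain ⟨K, hK⟩ := keyE ε₀ hε₀
    obtain ⟨M, hM⟩ := (ENNReal.tendsto_atTop_zero.mp hconv0) (ENNReal.ofReal ε₀)
      (ENNReal.ofReal_pos.mpr hε₀)
    obtain ⟨N1, hN1⟩ := hexN F hFmono hFexh K
    have hKm₀ : K ⊆ F (max M N1) := hN1.trans (hFmono (le_max_right _ _))
    have hLm₀ := hM (max M N1) (le_max_left _ _)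
    obtain ⟨N2, hN2⟩ := hexN F' hmono' hexh' K
    refine ⟨N2, fun n hn => ?_⟩
    have hsplit : (fun x => Complex.exp (ellSum a (F' n) x) - L x)
        = (fun x => (Complex.exp (ellSum a (F' n) x)
            - Complex.exp (ellSum a (F (max M N1)) x))
          + (Complex.exp (ellSum a (F (max M N1)) x) - L x)) := by
      funext x; ring
    rw [hsplit]
    refine le_trans (eLpNorm_add_le
      (((hmeas _).aestronglyMeasurable).sub ((hmeas _).aestronglyMeasurable))
      (((hmeas _).aestronglyMeasurable).sub (Lp.aestronglyMeasurable L)) one_le_two) ?_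
    have hterm1 := hK (F' n) (F (max M N1)) (hN2.trans (hmono' hn)) hKm₀
    calc eLpNorm (fun x => Complex.exp (ellSum a (F' n) x)
            - Complex.exp (ellSum a (F (max M N1)) x)) 2 μ
          + eLpNorm (fun x => Complex.exp (ellSum a (F (max M N1)) x) - L x) 2 μ
        ≤ ENNReal.ofReal ε₀ + ENNReal.ofReal ε₀ := add_le_add hterm1 hLm₀
      _ ≤ ε/2 + ε/2 := add_le_add hε₀lt.le hε₀lt.le
      _ = ε := ENNReal.add_halves ε
  -- the squared norm of the limit
  have hnΦ : ∀ n, eLpNorm (fun x => Complex.exp (ellSum a (F n) x)) 2 μ ^ 2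
      = ENNReal.ofReal (Real.exp (h * ∑ j ∈ F n, (a j).re^2)) := by
    intro n
    rw [sq_eLpNorm_two (memS (F n)), (exp_ell_sq_int hh hμ a (F n)).2]
  have hofn : ∀ n, eLpNorm (fun x => Complex.exp (ellSum a (F n) x)) 2 μ
      = ENNReal.ofReal ‖Φ n‖ := by
    intro n
    have : ‖Φ n‖ = (eLpNorm (fun x => Complex.exp (ellSum a (F n) x)) 2 μ).toReal := by
      rw [hΦdef]
      exact Lp.norm_toLp _ _
    rw [this, ENNReal.ofReal_toReal (memS (F n)).2.ne]
  have hLnorm : eLpNorm (⇑L) 2 μ = ENNReal.ofReal ‖L‖ := by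
    rw [Lp.norm_def, ENNReal.ofReal_toReal (Lp.eLpNorm_ne_top L)]
  have h4 : Tendsto (fun n => eLpNorm (fun x => Complex.exp (ellSum a (F n) x)) 2 μ ^ 2)
      atTop (𝓝 (eLpNorm (⇑L) 2 μ ^ 2)) := by
    have h1 : Tendsto (fun n => ‖Φ n‖) atTop (𝓝 ‖L‖) := hL.norm
    have h2 := ((ENNReal.continuous_pow 2).tendsto _).comp
      ((ENNReal.continuous_ofReal.tendsto _).comp h1)
    simp only [Function.comp_def] at h2
    simp_rw [hofn, hLnorm]
    exact h2
  have h5 : Tendsto (fun n => ENNReal.ofReal (Real.exp (h * ∑ j ∈ F n, (a j).re^2)))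
      atTop (𝓝 (ENNReal.ofReal (Real.exp (h * T)))) := by
    have hT : Tendsto (fun n => ∑ j ∈ F n, (a j).re^2) atTop (𝓝 T) :=
      hsumr.hasSum.comp (tendsto_atTop_finset_of_monotone hFmono hFexh)
    have hc : Continuous (fun t : ℝ => ENNReal.ofReal (Real.exp (h * t))) :=
      ENNReal.continuous_ofReal.comp (Real.continuous_exp.comp (continuous_const.mul continuous_id))
    have := (hc.tendsto T).comp hT
    simpa [Function.comp_def] using this
  have hEaN : eLpNorm (⇑L) 2 μ ^ 2 = ENNReal.ofReal (Real.exp (h * T)) := by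
    refine tendsto_nhds_unique ?_ h5
    simp_rw [← hnΦ]
    exact h4
  exact ⟨fun n => memS (F n), cauchy, ⟨⇑L, Lp.memLp L, hconv, hEaN⟩⟩
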